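/- Let R > 0 and c > 0 satisfy c·θ_hl > q·R and G(R, c) = 0. Then the partial derivative of G with respect to R at (R,c), namely qc(e^{cR} − 1) − c³·θ_ig·e^{cR}, equals c²(qR − c·θ_hl) and is strictly negative; and the partial derivative of G with respect to c at (R,c), namely qR(e^{cR} − 1) − 2c(θ_ig·e^{cR} − θ_hl) − c²·θ_ig·R·e^{cR}, equals cR(qR − c·θ_hl) − (2q/c)(e^{cR} − 1 − cR) and is strictly negative. -/

import Mathlib

open Set Filter

/-- The transcendental function `G(R,c) = q(e^{cR} − 1 − cR) − c²(θ_ig e^{cR} − θ_hl)`. -/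
noncomputable def G (q θig θhl R c : ℝ) : ℝ :=
  q * (Real.exp (c * R) - 1 - c * R) - c ^ 2 * (θig * Real.exp (c * R) - θhl)

/-- If `(R,c)` lies in the interior of `Q₊` and `G(R,c) = 0`, then both partial
derivatives of `G` at `(R,c)` are strictly negative, with the stated explicit
formulas and simplifications. -/
theorem stmt8 (q θig θhl : ℝ) (hq : 0 < q) (h1 : 0 < θig) (h2 : θig < θhl)
    (R c : ℝ) (hR : 0 < R) (hc : 0 < c) (hQ : q * R < c * θhl)
    (hG : G q θig θhl R c = 0) :
    (deriv (fun R' => G q θig θhl R' c) R =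
        q * c * (Real.exp (c * R) - 1) - c ^ 3 * θig * Real.exp (c * R) ∧
      q * c * (Real.exp (c * R) - 1) - c ^ 3 * θig * Real.exp (c * R) =
        c ^ 2 * (q * R - c * θhl) ∧
      q * c * (Real.exp (c * R) - 1) - c ^ 3 * θig * Real.exp (c * R) < 0) ∧
    (deriv (fun c' => G q θig θhl R c') c =
        q * R * (Real.exp (c * R) - 1) - 2 * c * (θig * Real.exp (c * R) - θhl)
          - c ^ 2 * θig * R * Real.exp (c * R) ∧
      q * R * (Real.exp (c * R) - 1) - 2 * c * (θig * Real.exp (c * R) - θhl)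
          - c ^ 2 * θig * R * Real.exp (c * R) =
        c * R * (q * R - c * θhl) - (2 * q / c) * (Real.exp (c * R) - 1 - c * R) ∧
      q * R * (Real.exp (c * R) - 1) - 2 * c * (θig * Real.exp (c * R) - θhl)
          - c ^ 2 * θig * R * Real.exp (c * R) < 0) := by
  have hcR : 0 < c * R := mul_pos hc hR
  have hexp : Real.exp (c * R) - 1 - c * R > 0 := by
    have := Real.add_one_lt_exp (ne_of_gt hcR)
    linarith
  have key : c ^ 2 * (θig * Real.exp (c * R) - θhl)
      = q * (Real.exp (c * R) - 1 - c * R) := by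
    unfold G at hG; linarith
  -- derivative in R
  have hdR : HasDerivAt (fun R' => G q θig θhl R' c)
      (q * c * (Real.exp (c * R) - 1) - c ^ 3 * θig * Real.exp (c * R)) R := by
    have he : HasDerivAt (fun R' : ℝ => Real.exp (c * R'))
        (Real.exp (c * R) * (c * 1)) R := ((hasDerivAt_id R).const_mul c).exp
    have h := (((he.sub_const 1).sub ((hasDerivAt_id R).const_mul c)).const_mul q).sub
      (((he.const_mul θig).sub_const θhl).const_mul (c ^ 2))
    refine HasDerivAt.congr_deriv h ?_
    ring
  -- derivative in c
  have hdc : HasDerivAt (fun c' => G q θig θhl R c')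
      (q * R * (Real.exp (c * R) - 1) - 2 * c * (θig * Real.exp (c * R) - θhl)
        - c ^ 2 * θig * R * Real.exp (c * R)) c := by
    have he : HasDerivAt (fun c' : ℝ => Real.exp (c' * R))
        (Real.exp (c * R) * (1 * R)) c := ((hasDerivAt_id c).mul_const R).exp
    have hsq : HasDerivAt (fun c' : ℝ => c' ^ 2) (2 * c) c := by
      simpa using hasDerivAt_pow 2 c
    have h := (((he.sub_const 1).sub ((hasDerivAt_id c).mul_const R)).const_mul q).sub
      (hsq.mul ((he.const_mul θig).sub_const θhl))
    refine HasDerivAt.congr_deriv h ?_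
    ring
  have hneg : q * R - c * θhl < 0 := by linarith
  have eq1 : q * c * (Real.exp (c * R) - 1) - c ^ 3 * θig * Real.exp (c * R) =
      c ^ 2 * (q * R - c * θhl) := by linear_combination (-c) * key
  have eq2 : q * R * (Real.exp (c * R) - 1) - 2 * c * (θig * Real.exp (c * R) - θhl)
        - c ^ 2 * θig * R * Real.exp (c * R) =
      c * R * (q * R - c * θhl) - (2 * q / c) * (Real.exp (c * R) - 1 - c * R) := by
    have hc' : c ≠ 0 := ne_of_gt hc
    set E := Real.exp (c * R) with hE
    field_simp
    linear_combination (-(2 + R * c)) * key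
  refine ⟨⟨hdR.deriv, eq1, ?_⟩, ⟨hdc.deriv, eq2, ?_⟩⟩
  · rw [eq1]
    exact mul_neg_of_pos_of_neg (by positivity) hneg
  · rw [eq2]
    have h3 : c * R * (q * R - c * θhl) < 0 := mul_neg_of_pos_of_neg hcR hneg
    have h4 : (2 * q / c) * (Real.exp (c * R) - 1 - c * R) > 0 :=
      mul_pos (div_pos (by linarith) hc) hexp
    linarith
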